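/- Let C(c) = Σᵢ₌₀^∞ bᵢcⁱ with bᵢ ≥ 0, Σᵢ bᵢ = 1, and b₀ = 0 (i.e., C(0) = 0 and C(1) = 1). Then max over c ∈ [−1,1] of |C(c) − c| ≤ 2(C'(1) − 1) and max over c ∈ [−1,1] of |C'(c) − 1| ≤ 3(C'(1) − 1). -/

import Mathlib

lemma abs_triangle_sub' (x y : ℝ) : |x - y| ≤ |x| + |y| := by
  rw [sub_eq_add_neg]
  exact (abs_add_le _ _).trans (by rw [abs_neg])

lemma abs_hasSum_le {a g : ℕ → ℝ} {S T : ℝ} (ha : HasSum a S) (hg : HasSum g T)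
    (h : ∀ i, |a i| ≤ g i) : |S| ≤ T := by
  rw [abs_le]
  exact ⟨hasSum_le (fun i => (abs_le.mp (h i)).1) hg.neg ha,
         hasSum_le (fun i => (abs_le.mp (h i)).2) ha hg⟩

theorem deviation_bound_zero_at_zero (b : ℕ → ℝ) (hb : ∀ i, 0 ≤ b i)
    (hsum : HasSum b 1) (hb0 : b 0 = 0)
    (C D : ℝ → ℝ)
    (hC : ∀ c ∈ Set.Icc (-1:ℝ) 1, HasSum (fun i => b i * c ^ i) (C c))
    (hD : ∀ c ∈ Set.Icc (-1:ℝ) 1, HasSum (fun i : ℕ => (i : ℝ) * b i * c ^ (i - 1)) (D c)) :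
    (∀ c ∈ Set.Icc (-1:ℝ) 1, |C c - c| ≤ 2 * (D 1 - 1)) ∧
    (∀ c ∈ Set.Icc (-1:ℝ) 1, |D c - 1| ≤ 3 * (D 1 - 1)) := by
  have habs : ∀ c ∈ Set.Icc (-1:ℝ) 1, ∀ n : ℕ, |c ^ n| ≤ 1 := by
    intro c hc n
    rw [abs_pow]
    exact pow_le_one₀ (abs_nonneg c) (abs_le.mpr ⟨hc.1, hc.2⟩)
  have hD1 : HasSum (fun i : ℕ => (i:ℝ) * b i) (D 1) := by
    have := hD 1 (by norm_num)
    simpa using this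
  have hg : HasSum (fun i : ℕ => ((i:ℝ) - 1) * b i) (D 1 - 1) := by
    have h := hD1.sub hsum
    convert h using 2 with i
    · rfl
    · ring
  constructor
  · intro c hc
    have hCc : HasSum (fun i => b i * c ^ i - b i * c) (C c - c) := by
      have := (hC c hc).sub (hsum.mul_right c)
      simpa using this
    refine abs_hasSum_le hCc (hg.mul_left 2) ?_
    intro i
    match i with
    | 0 => simp [hb0]
    | 1 => simp
    | (n+2) =>
      have hbn := hb (n+2)
      have h2 : |c| ≤ 1 := abs_le.mpr ⟨hc.1, hc.2⟩
      have h1 : |c ^ (n+2)| ≤ 1 := habs c hc _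
      show |b (n+2) * c ^ (n+2) - b (n+2) * c| ≤ 2 * (((((n+2:ℕ):ℝ)) - 1) * b (n+2))
      rw [← mul_sub, abs_mul, abs_of_nonneg hbn]
      have h3 : |c ^ (n+2) - c| ≤ 2 :=
        (abs_triangle_sub' _ _).trans (by linarith)
      have h4 : (1:ℝ) ≤ ((n+2:ℕ):ℝ) - 1 := by push_cast; linarith
      nlinarith
  · intro c hc
    have hDc : HasSum (fun i : ℕ => (i:ℝ) * b i * c ^ (i-1) - b i) (D c - 1) :=
      (hD c hc).sub hsum
    refine abs_hasSum_le hDc (hg.mul_left 3) ?_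
    intro i
    match i with
    | 0 => simp [hb0]
    | 1 => simp
    | (n+2) =>
      have hbn := hb (n+2)
      have h1 : |c ^ (n+1)| ≤ 1 := habs c hc _
      have key := abs_triangle_sub' (((n+2:ℕ):ℝ) * b (n+2) * c ^ (n+1)) (b (n+2))
      have h5 : |((n+2:ℕ):ℝ) * b (n+2) * c ^ (n+1)|
          = ((n+2:ℕ):ℝ) * b (n+2) * |c ^ (n+1)| := by
        rw [abs_mul, abs_mul, abs_of_nonneg (by positivity : (0:ℝ) ≤ ((n+2:ℕ):ℝ)),
          abs_of_nonneg hbn]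
      have h6 : |b (n+2)| = b (n+2) := abs_of_nonneg hbn
      show |((n+2:ℕ):ℝ) * b (n+2) * c ^ (n+1) - b (n+2)| ≤ 3 * (((((n+2:ℕ):ℝ)) - 1) * b (n+2))
      rw [h5, h6] at key
      have h7 : ((n+2:ℕ):ℝ) = (n:ℝ) + 2 := by push_cast; ring
      rw [h7] at key ⊢
      have hn : (0:ℝ) ≤ (n:ℝ) := Nat.cast_nonneg n
      have h8 : ((n:ℝ)+2) * b (n+2) * |c ^ (n+1)| ≤ ((n:ℝ)+2) * b (n+2) := by
        exact mul_le_of_le_one_right (mul_nonneg (by positivity) hbn) h1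
      nlinarith [mul_nonneg hn hbn]
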